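/- arXiv:2108.09270 — 12 statements merged into one kernel-verified Lean document; each statement's English description precedes it below -/
import Mathlib

section
/- For all x and n in M, there exists a unique y in M such that Sum x n y holds. (In particular, a binary addition operation on M is well defined by recursion on the second argument, even though s is not assumed injective.) -/
inductive SumRel {M : Type} (z : M) (s : M → M) : M → M → M → Prop
  | base (x : M) : SumRel z s x z x
  | step {x n y : M} : SumRel z s x n y → SumRel z s x (s n) (s y)

lemma sumrel_char {M : Type} {z : M} {s : M → M} {x n y : M}
    (h : SumRel z s x n y) : ∃ k : ℕ, n = s^[k] z ∧ y = s^[k] x := by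
  induction h with
  | base => exact ⟨0, rfl, rfl⟩
  | step _ ih =>
    obtain ⟨k, hn, hy⟩ := ih
    exact ⟨k + 1, by rw [hn, Function.iterate_succ_apply'],
      by rw [hy, Function.iterate_succ_apply']⟩

lemma sumrel_iter {M : Type} (z : M) (s : M → M) (x : M) :
    ∀ k : ℕ, SumRel z s x (s^[k] z) (s^[k] x) := by
  intro k
  induction k with
  | zero => exact SumRel.base x
  | succ k ih =>
    rw [Function.iterate_succ_apply', Function.iterate_succ_apply']
    exact SumRel.step ih

theorem stmt0 (M : Type) (z : M) (s : M → M)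
    (ind : ∀ P : M → Prop, P z → (∀ x, P x → P (s x)) → ∀ x, P x)
    (hz : ∀ x : M, s x ≠ z) :
    ∀ x n : M, ∃! y : M, SumRel z s x n y := by
  -- every element is an iterate of s on z
  have repr : ∀ c : M, ∃ j : ℕ, c = s^[j] z := by
    apply ind
    · exact ⟨0, rfl⟩
    · rintro c ⟨j, rfl⟩
      exact ⟨j + 1, by rw [Function.iterate_succ_apply']⟩
  -- key: iterates agreeing on z agree everywhere
  have crux : ∀ a b : ℕ, s^[a] z = s^[b] z → ∀ x : M, s^[a] x = s^[b] x := by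
    intro a b hab x
    obtain ⟨j, rfl⟩ := repr x
    calc s^[a] (s^[j] z) = s^[j] (s^[a] z) := by
          rw [← Function.iterate_add_apply, ← Function.iterate_add_apply, Nat.add_comm]
      _ = s^[j] (s^[b] z) := by rw [hab]
      _ = s^[b] (s^[j] z) := by
          rw [← Function.iterate_add_apply, ← Function.iterate_add_apply, Nat.add_comm]
  intro x n
  obtain ⟨k, rfl⟩ := repr n
  refine ⟨s^[k] x, sumrel_iter z s x k, ?_⟩
  intro y' hy'
  obtain ⟨k', hn, hy⟩ := sumrel_char hy'
  rw [hy]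
  exact crux k' k hn.symm x
end

section
/- Weak trichotomy holds on M: for all x, y in M, at least one of x < y, x = y, or y < x holds. -/
theorem stmt6 (M : Type) (z : M) (s : M → M)
    (ind : ∀ P : M → Prop, P z → (∀ x, P x → P (s x)) → ∀ x, P x)
    (hz : ∀ x : M, s x ≠ z)
    (add : M → M → M)
    (haddz : ∀ x : M, add x z = x)
    (hadds : ∀ x n : M, add x (s n) = s (add x n)) :
    ∀ x y : M, (∃ n : M, add x (s n) = y) ∨ x = y ∨ (∃ n : M, add y (s n) = x) := by
  -- every element is z or a successor of something
  have hcov : ∀ x : M, x = z ∨ ∃ m : M, s m = x := by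
    intro x
    refine ind (fun x => x = z ∨ ∃ m : M, s m = x) (Or.inl rfl) (fun a _ => Or.inr ⟨a, rfl⟩) x
  have hsadd : ∀ a b : M, add (s a) b = s (add a b) := by
    intro a b
    refine ind (fun b => add (s a) b = s (add a b)) ?_ ?_ b
    · show add (s a) z = s (add a z); rw [haddz, haddz]
    · intro n h
      show add (s a) (s n) = s (add a (s n))
      rw [hadds, h, hadds]
  intro x y
  refine ind (fun y => (∃ n : M, add x (s n) = y) ∨ x = y ∨ (∃ n : M, add y (s n) = x)) ?_ ?_ y
  · -- y = z case : x = z ∨ z < x, by induction on x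
    clear y
    refine ind (fun x => (∃ n : M, add x (s n) = z) ∨ x = z ∨ (∃ n : M, add z (s n) = x)) ?_ ?_ x
    · exact Or.inr (Or.inl rfl)
    · intro a ih
      rcases ih with ⟨n, h⟩ | h | ⟨n, h⟩
      · exact absurd h (by rw [hadds]; exact hz _)
      · exact Or.inr (Or.inr ⟨z, by rw [hadds, haddz, h]⟩)
      · exact Or.inr (Or.inr ⟨s n, by rw [hadds, h]⟩)
  · intro b ih
    rcases ih with ⟨n, h⟩ | h | ⟨n, h⟩
    · exact Or.inl ⟨s n, by rw [hadds, h]⟩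
    · subst h; exact Or.inl ⟨z, by rw [hadds, haddz]⟩
    · rcases hcov n with h0 | ⟨m, hm⟩
      · subst h0; rw [hadds, haddz] at h
        exact Or.inr (Or.inl h.symm)
      · subst hm
        refine Or.inr (Or.inr ⟨m, ?_⟩)
        rw [hsadd, ← hadds, h]
end

section
/- For all x, y in M, if x < y then s x < y or s x = y. -/
theorem stmt7 (M : Type) (z : M) (s : M → M)
    (ind : ∀ P : M → Prop, P z → (∀ x, P x → P (s x)) → ∀ x, P x)
    (hz : ∀ x : M, s x ≠ z)
    (add : M → M → M)
    (haddz : ∀ x : M, add x z = x)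
    (hadds : ∀ x n : M, add x (s n) = s (add x n)) :
    ∀ x y : M, (∃ n : M, add x (s n) = y) →
      (∃ n : M, add (s x) (s n) = y) ∨ s x = y := by
  have key : ∀ x n : M, add (s x) n = s (add x n) := by
    intro x
    refine ind (fun n => add (s x) n = s (add x n)) ?_ ?_
    · show add (s x) z = s (add x z); rw [haddz, haddz]
    · intro n h; show add (s x) (s n) = s (add x (s n)); rw [hadds, h, hadds]
  have cases : ∀ n : M, n = z ∨ ∃ m, n = s m := by
    refine ind _ (Or.inl rfl) ?_
    intro m _; exact Or.inr ⟨m, rfl⟩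
  rintro x y ⟨n, hn⟩
  rcases cases n with rfl | ⟨m, rfl⟩
  · right; rw [hadds, haddz] at hn; exact hn
  · left; exact ⟨m, by rw [key, ← hadds]; exact hn⟩
end

section
/- Annihilation Theorem: if u ⊕ m = u for some u, m in M, and f : X → X is injective, then φ m is the identity on X, i.e., φ m x = x for all x in X. -/
theorem stmt11 (M : Type) (z : M) (s : M → M)
    (ind : ∀ P : M → Prop, P z → (∀ x, P x → P (s x)) → ∀ x, P x)
    (hz : ∀ x : M, s x ≠ z)
    (add : M → M → M)
    (haddz : ∀ x : M, add x z = x)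
    (hadds : ∀ x n : M, add x (s n) = s (add x n))
    (X : Type) (f : X → X) (hf : Function.Injective f)
    (φ : M → X → X)
    (hφz : φ z = id)
    (hφs : ∀ m : M, φ (s m) = f ∘ φ m)
    (u m : M) (hum : add u m = u) :
    ∀ x : X, φ m x = x := by
  have hcomm : ∀ x : M, f ∘ φ x = φ x ∘ f := by
    refine ind _ ?_ ?_
    · simp [hφz]
    · intro x ih
      rw [hφs, Function.comp_assoc, ← ih]
  have hhom : ∀ n x : M, φ (add x n) = φ x ∘ φ n := by
    refine ind (fun n => ∀ x, φ (add x n) = φ x ∘ φ n) ?_ ?_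
    · intro x; simp [haddz, hφz]
    · intro n ih x
      rw [hadds, hφs, hφs, ih, ← Function.comp_assoc, hcomm, Function.comp_assoc]
  have hinj : ∀ x : M, Function.Injective (φ x) := by
    refine ind _ ?_ ?_
    · simp [hφz]; exact fun a b h => h
    · intro x ih; rw [hφs]; exact hf.comp ih
  intro x
  have h := congrArg (fun g => g x) (hhom m u)
  simp [hum] at h
  exact hinj u h.symm
end

section
/- If the successor map s is not injective, then M is a finite type. Equivalently, if M is infinite then s is injective. -/
theorem stmt12 (M : Type) (z : M) (s : M → M)
    (ind : ∀ P : M → Prop, P z → (∀ x, P x → P (s x)) → ∀ x, P x)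
    (hz : ∀ x : M, s x ≠ z)
    (hnotinj : ¬ Function.Injective s) :
    Finite M := by
  set f : ℕ → M := fun n => s^[n] z with hf
  have hrep : ∀ x : M, ∃ k, f k = x := by
    apply ind
    · exact ⟨0, rfl⟩
    · rintro x ⟨k, rfl⟩
      exact ⟨k + 1, Function.iterate_succ_apply' s k z⟩
  -- get m < n with f (m+1) = f (n+1)
  obtain ⟨m, n, hmn, heq⟩ : ∃ m n : ℕ, m < n ∧ f (m + 1) = f (n + 1) := by
    simp only [Function.Injective, not_forall] at hnotinj
    obtain ⟨a, b, hab, hne⟩ := hnotinj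
    obtain ⟨p, rfl⟩ := hrep a
    obtain ⟨q, rfl⟩ := hrep b
    have hpq : p ≠ q := fun h => hne (by rw [h])
    rcases hpq.lt_or_gt with h | h
    · exact ⟨p, q, h, by
        simpa [hf, Function.iterate_succ_apply' s] using hab⟩
    · exact ⟨q, p, h, by
        simpa [hf, Function.iterate_succ_apply' s] using hab.symm⟩
  have key : ∀ x : M, ∃ k ≤ n, f k = x := by
    apply ind
    · exact ⟨0, Nat.zero_le _, rfl⟩
    · rintro x ⟨k, hk, rfl⟩
      rcases eq_or_lt_of_le hk with h | h
      · refine ⟨m + 1, hmn, ?_⟩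
        rw [heq, ← h]
        exact Function.iterate_succ_apply' s k z
      · exact ⟨k + 1, h, Function.iterate_succ_apply' s k z⟩
  have : Function.Surjective (fun i : Fin (n + 1) => f i) := by
    intro x
    obtain ⟨k, hk, hkx⟩ := key x
    exact ⟨⟨k, Nat.lt_succ_of_le hk⟩, hkx⟩
  exact Finite.of_surjective _ this
end

section
/- There are no double successors inside the stem: if u ∈ STEM and s u ∈ STEM, then for every v in M, s v = s u implies v = u. -/
def STEM {M : Type} (z : M) (s : M → M) : Set M :=
  { x | ∀ X : Set M, z ∈ X →
      (∀ u, u ∈ X → (∀ v, s v = s u → v = u) → s u ∈ X) → x ∈ X }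

theorem stmt13 (M : Type) (z : M) (s : M → M)
    (ind : ∀ P : M → Prop, P z → (∀ x, P x → P (s x)) → ∀ x, P x)
    (hz : ∀ x : M, s x ≠ z) :
    ∀ u : M, u ∈ STEM z s → s u ∈ STEM z s → ∀ v : M, s v = s u → v = u := by
  intro u _ hsu v hv
  have h := hsu {x | x = z ∨ ∃ w, x = s w ∧ ∀ v, s v = s w → v = w}
    (Or.inl rfl) (fun a _ ha => Or.inr ⟨a, rfl, ha⟩)
  rcases h with h | ⟨w, hw, hwprop⟩
  · exact absurd h (hz u)
  · have hu : u = w := hwprop u hw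
    have hv' : v = w := hwprop v (hv.trans hw)
    rw [hu, hv']
end

section
/- The stem is closed under predecessors: for all y in M, if s y ∈ STEM then y ∈ STEM. -/
theorem stmt14 (M : Type) (z : M) (s : M → M)
    (ind : ∀ P : M → Prop, P z → (∀ x, P x → P (s x)) → ∀ x, P x)
    (hz : ∀ x : M, s x ≠ z) :
    ∀ y : M, s y ∈ STEM z s → y ∈ STEM z s := by
  intro y hy
  have key : s y ∈ {x | x ∈ STEM z s ∧
      (x = z ∨ ∃ u, u ∈ STEM z s ∧ (∀ v, s v = s u → v = u) ∧ x = s u)} := by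
    apply hy
    · exact ⟨fun X hzX _ => hzX, Or.inl rfl⟩
    · rintro u ⟨huS, _⟩ huniq
      refine ⟨fun X hzX hcl => hcl u (huS X hzX hcl) huniq, Or.inr ⟨u, huS, huniq, rfl⟩⟩
  rcases key with ⟨_, h | ⟨u, huS, huniq, heq⟩⟩
  · exact absurd h (hz y)
  · rw [huniq y heq]; exact huS
end

section
/- If s k = s n with k ∈ STEM and k ≠ n, then k is the maximum of the stem: STEM = { x ∈ M : x < k ∨ x = k }. -/
theorem stmt15 (M : Type) (z : M) (s : M → M)
    (ind : ∀ P : M → Prop, P z → (∀ x, P x → P (s x)) → ∀ x, P x)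
    (hz : ∀ x : M, s x ≠ z)
    (add : M → M → M)
    (haddz : ∀ x : M, add x z = x)
    (hadds : ∀ x n : M, add x (s n) = s (add x n))
    (k n : M) (hkn : s k = s n) (hk : k ∈ STEM z s) (hne : k ≠ n) :
    STEM z s = { x : M | (∃ j : M, add x (s j) = k) ∨ x = k } := by
  have addsl : ∀ t u : M, add (s u) t = s (add u t) :=
    ind (fun t => ∀ u, add (s u) t = s (add u t))
      (fun u => by rw [haddz, haddz])
      (fun t ih u => by rw [hadds, hadds, ih])
  have reach : ∀ x : M, x = z ∨ ∃ j, add z (s j) = x :=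
    ind _ (Or.inl rfl)
      (fun x ih => Or.inr (by
        rcases ih with h | ⟨j, hj⟩
        · exact ⟨z, by rw [hadds, haddz, h]⟩
        · exact ⟨s j, by rw [hadds, hj]⟩))
  have cases' : ∀ x : M, x = z ∨ ∃ j, s j = x :=
    ind _ (Or.inl rfl) (fun x _ => Or.inr ⟨x, rfl⟩)
  ext x
  constructor
  · intro hx
    refine hx { y | (∃ j : M, add y (s j) = k) ∨ y = k } ?_ ?_
    · rcases reach k with h | ⟨j, hj⟩
      · exact Or.inr h.symm
      · exact Or.inl ⟨j, hj⟩
    · intro u hu hinj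
      rcases hu with ⟨j, hj⟩ | rfl
      · rcases cases' j with rfl | ⟨j', rfl⟩
        · right
          rw [hadds, haddz] at hj
          exact hj
        · left
          exact ⟨j', by rw [addsl, ← hadds, hj]⟩
      · exact absurd (hinj n hkn.symm) (fun h => hne h.symm)
  · intro hx
    have hmem : k ∈ {u : M | u ∈ STEM z s ∧
        ∀ y : M, ((∃ j, add y (s j) = u) ∨ y = u) → y ∈ STEM z s} := by
      refine hk _ ?_ ?_
      · refine ⟨fun X hzX _ => hzX, ?_⟩
        intro y hy
        rcases hy with ⟨j, hj⟩ | rfl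
        · rw [hadds] at hj
          exact absurd hj (hz _)
        · exact fun X hzX _ => hzX
      · rintro u ⟨huS, hule⟩ hinj
        refine ⟨fun X hzX hclX => hclX u (huS X hzX hclX) hinj, ?_⟩
        intro y hy
        rcases hy with ⟨j, hj⟩ | rfl
        · rw [hadds] at hj
          have hju : add y j = u := hinj _ hj
          rcases cases' j with rfl | ⟨j', rfl⟩
          · rw [haddz] at hju
            exact hju ▸ huS
          · exact hule y (Or.inl ⟨j', hju⟩)
        · exact fun X hzX hclX => hclX u (huS X hzX hclX) hinj
    exact hmem.2 x hx
end

section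
/- The loop and the stem are disjoint: L(n) ∩ STEM = ∅. -/
def LOOP {M : Type} (s : M → M) (n : M) : Set M :=
  { x | ∀ X : Set M, n ∈ X → (∀ u, u ∈ X → s u ∈ X) → x ∈ X }

section Aux
variable {M : Type} (s : M → M)

lemma loop_self (n : M) : n ∈ LOOP s n := fun _ hn _ => hn

lemma loop_succ {n x : M} (h : x ∈ LOOP s n) : s x ∈ LOOP s n :=
  fun X hn hc => hc x (h X hn hc)

lemma loop_mono {n m : M} (h : m ∈ LOOP s n) : LOOP s m ⊆ LOOP s n := by
  intro y hy
  exact hy (LOOP s n) h (fun u hu => loop_succ s hu)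

lemma loop_cases {n y : M} (h : y ∈ LOOP s n) : y = n ∨ y ∈ LOOP s (s n) := by
  refine h {x | x = n ∨ x ∈ LOOP s (s n)} (Or.inl rfl) ?_
  rintro u (rfl | hu)
  · exact Or.inr (loop_self s _)
  · exact Or.inr (loop_succ s hu)

lemma loop_elim {n y : M} (h : y ∈ LOOP s n) :
    y = n ∨ ∃ w, w ∈ LOOP s n ∧ y = s w := by
  refine h {x | x = n ∨ ∃ w, w ∈ LOOP s n ∧ x = s w} (Or.inl rfl) ?_
  rintro u hu
  have hun : u ∈ LOOP s n := by
    rcases hu with rfl | ⟨w, hw, rfl⟩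
    · exact loop_self s _
    · exact loop_succ s hw
  exact Or.inr ⟨u, hun, rfl⟩

lemma mem_stem {z : M} : z ∈ STEM z s := fun _ hzX _ => hzX

lemma stem_pred {z : M} {x : M} (hx : x ∈ STEM z s) :
    x = z ∨ ∃ w, w ∈ STEM z s ∧ (∀ v, s v = s w → v = w) ∧ x = s w := by
  refine hx {x | x = z ∨ ∃ w, w ∈ STEM z s ∧ (∀ v, s v = s w → v = w) ∧ x = s w}
    (Or.inl rfl) ?_
  rintro u hu hinj
  have hus : u ∈ STEM z s := by
    rcases hu with rfl | ⟨w, hw, hwinj, rfl⟩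
    · exact mem_stem s
    · exact fun X hzX hcl => hcl w (hw X hzX hcl) hwinj
  exact Or.inr ⟨u, hus, hinj, rfl⟩

lemma stem_nonperiodic {z : M} (hz : ∀ x : M, s x ≠ z) {x : M} (hx : x ∈ STEM z s) :
    x ∉ LOOP s (s x) := by
  refine hx {x | x ∉ LOOP s (s x)} ?_ ?_
  · intro hzl
    obtain ⟨w, hw⟩ :=
      hzl (Set.range s) ⟨z, rfl⟩ (fun u _ => ⟨u, rfl⟩)
    exact hz w hw
  · intro u hu hinj hsu
    rcases loop_elim s hsu with h | ⟨w, hw, hsw⟩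
    · have e : s u = u := hinj (s u) h.symm
      have h2 : u ∈ LOOP s (s u) := by rw [e]; exact loop_self s u
      exact hu h2
    · have e : w = u := hinj w hsw.symm
      rw [e] at hw
      exact hu (loop_mono s (loop_succ s (loop_self s (s u))) hw)

end Aux

theorem stmt16 (M : Type) (z : M) (s : M → M)
    (ind : ∀ P : M → Prop, P z → (∀ x, P x → P (s x)) → ∀ x, P x)
    (hz : ∀ x : M, s x ≠ z)
    (k n : M) (hkn : s k = s n) (hk : k ∈ STEM z s) (hne : k ≠ n) :
    LOOP s n ∩ STEM z s = ∅ := by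
  -- everything is reachable from z
  have reach : ∀ y : M, y ∈ LOOP s z :=
    ind (fun y => y ∈ LOOP s z) (loop_self s z) (fun x hx => loop_succ s hx)
  -- comparability of any two elements
  have comp : ∀ x y : M, x ∈ LOOP s y ∨ y ∈ LOOP s x := by
    refine ind (fun x => ∀ y, x ∈ LOOP s y ∨ y ∈ LOOP s x) ?_ ?_
    · intro y
      exact Or.inr (reach y)
    · intro x hx y
      rcases hx y with h | h
      · exact Or.inl (loop_succ s h)
      · rcases loop_cases s h with rfl | h'
        · exact Or.inl (loop_succ s (loop_self s y))
        · exact Or.inr h'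
  -- n is not in the stem
  have hnstem : n ∉ STEM z s := by
    intro hn
    rcases comp k n with h | h
    · rcases loop_cases s h with rfl | h'
      · exact hne rfl
      · rw [← hkn] at h'
        exact stem_nonperiodic s hz hk h'
    · rcases loop_cases s h with rfl | h'
      · exact hne rfl
      · rw [hkn] at h'
        exact stem_nonperiodic s hz hn h'
  -- the loop avoids the stem
  ext x
  simp only [Set.mem_inter_iff, Set.mem_empty_iff_false, iff_false, not_and]
  intro hL hS
  have : x ∉ STEM z s := by
    refine hL {x | x ∉ STEM z s} hnstem ?_
    intro u hu hsu
    rcases stem_pred s hsu with h | ⟨w, hw, hwinj, hsw⟩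
    · exact hz u h
    · have := hwinj u hsw
      subst this
      exact hu hw
  exact this hS
end

section
/- The stem and loop cover everything: M = L(n) ∪ STEM, i.e., every element of M lies in STEM or in L(n). -/
theorem stmt17 (M : Type) (z : M) (s : M → M)
    (ind : ∀ P : M → Prop, P z → (∀ x, P x → P (s x)) → ∀ x, P x)
    (hz : ∀ x : M, s x ≠ z)
    (k n : M) (hkn : s k = s n) (hk : k ∈ STEM z s) (hne : k ≠ n) :
    ∀ x : M, x ∈ LOOP s n ∨ x ∈ STEM z s := by
  classical
  -- every element is an iterate of z
  have surj : ∀ x : M, ∃ m : ℕ, x = s^[m] z := by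
    intro x
    refine ind (fun x => ∃ m, x = s^[m] z) ⟨0, rfl⟩ ?_ x
    rintro y ⟨m, rfl⟩
    exact ⟨m + 1, (Function.iterate_succ_apply' s m z).symm⟩
  obtain ⟨b, hb⟩ := surj n
  have loopmem : ∀ t : ℕ, s^[t] n ∈ LOOP s n := by
    intro t
    induction t with
    | zero => intro X hX _; exact hX
    | succ t ih =>
      intro X hn hcl
      rw [Function.iterate_succ_apply']
      exact hcl _ (ih X hn hcl)
  -- periodicity: a single coincidence propagates
  have shift : ∀ a d : ℕ, s^[a] z = s^[a + d] z → ∀ i, s^[a + i] z = s^[a + d + i] z := by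
    intro a d h i
    have h1 : s^[i] (s^[a] z) = s^[i] (s^[a + d] z) := by rw [h]
    have e1 : s^[a + i] z = s^[i] (s^[a] z) := by
      rw [← Function.iterate_add_apply]; ring_nf
    have e2 : s^[a + d + i] z = s^[i] (s^[a + d] z) := by
      rw [← Function.iterate_add_apply]; ring_nf
    rw [e1, e2, h1]
  have key : ∀ a d : ℕ, s^[a] z = s^[a + d] z → ∀ j, a ≤ j → ∀ c,
      s^[j] z = s^[j + c * d] z := by
    intro a d h j hj c
    induction c with
    | zero => simp
    | succ c ih =>
      have step : s^[j + c * d] z = s^[j + c * d + d] z := by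
        have := shift a d h (j + c * d - a)
        have e1 : a + (j + c * d - a) = j + c * d := by omega
        have e2 : a + d + (j + c * d - a) = j + c * d + d := by omega
        rw [e1, e2] at this
        exact this
      rw [ih, step]
      congr 1
      ring
  -- main induction on the index
  have main : ∀ m : ℕ, s^[m] z ∈ LOOP s n ∨ s^[m] z ∈ STEM z s := by
    intro m
    induction m with
    | zero => exact Or.inr (fun X hX _ => hX)
    | succ m ih =>
      rw [Function.iterate_succ_apply']
      rcases ih with hL | hS
      · -- loop is closed under s
        exact Or.inl (fun X hn hcl => hcl _ (hL X hn hcl))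
      · by_cases hinj : ∀ v, s v = s (s^[m] z) → v = s^[m] z
        · exact Or.inr (fun X hzX hcl => hcl _ (hS X hzX hcl) hinj)
        · push_neg at hinj
          obtain ⟨v, hv, hvx⟩ := hinj
          obtain ⟨p, rfl⟩ := surj v
          have hpm : p ≠ m := by rintro rfl; exact hvx rfl
          have hs : s^[p + 1] z = s^[m + 1] z := by
            rw [Function.iterate_succ_apply', Function.iterate_succ_apply']
            exact hv
          -- get periodicity data
          have hper : ∃ d : ℕ, 0 < d ∧ ∀ c, s^[m + 1] z = s^[m + 1 + c * d] z := by
            rcases Nat.lt_or_ge p m with hlt | hge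
            · refine ⟨m - p, by omega, ?_⟩
              have h0 : s^[p + 1] z = s^[p + 1 + (m - p)] z := by
                have : p + 1 + (m - p) = m + 1 := by omega
                rw [this]; exact hs
              exact key (p + 1) (m - p) h0 (m + 1) (by omega)
            · have hlt : m < p := by omega
              refine ⟨p - m, by omega, ?_⟩
              have h0 : s^[m + 1] z = s^[m + 1 + (p - m)] z := by
                have : m + 1 + (p - m) = p + 1 := by omega
                rw [this]; exact hs.symm
              exact key (m + 1) (p - m) h0 (m + 1) le_rfl
          obtain ⟨d, hd, hc⟩ := hper
          -- s^[m+1] z lies in the loop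
          left
          have hbd : b ≤ m + 1 + b * d := by nlinarith
          set t := m + 1 + b * d - b with ht
          have : s^[t] n = s^[m + 1] z := by
            rw [hb, ← Function.iterate_add_apply]
            have e : t + b = m + 1 + b * d := by omega
            rw [e]
            exact (hc b).symm
          rw [Function.iterate_succ_apply'] at this
          rw [← this]
          exact loopmem t
  intro x
  obtain ⟨m, rfl⟩ := surj x
  exact main m
end

section
/- The successor map is surjective on the loop: for every y in L(n) there exists x in L(n) with s x = y. In particular, n itself is the successor of some element of L(n). -/
theorem stmt18 (M : Type) (z : M) (s : M → M)
    (ind : ∀ P : M → Prop, P z → (∀ x, P x → P (s x)) → ∀ x, P x)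
    (hz : ∀ x : M, s x ≠ z)
    (k n : M) (hkn : s k = s n) (hk : k ∈ STEM z s) (hne : k ≠ n) :
    ∀ y ∈ LOOP s n, ∃ x ∈ LOOP s n, s x = y := by
  have split : ∀ (a : M), ∀ y ∈ LOOP s a, y = a ∨ y ∈ LOOP s (s a) := by
    intro a y hy
    refine hy {y | y = a ∨ y ∈ LOOP s (s a)} (Or.inl rfl) ?_
    rintro u (rfl | hu)
    · exact Or.inr (fun X hX _ => hX)
    · exact Or.inr (fun X hX hc => hc _ (hu X hX hc))
  have pre : ∀ (a : M), ∀ y ∈ LOOP s (s a), ∃ w ∈ LOOP s a, s w = y := by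
    intro a y hy
    refine hy {y | ∃ w ∈ LOOP s a, s w = y} ⟨a, fun X hX _ => hX, rfl⟩ ?_
    rintro u ⟨w, hw, rfl⟩
    exact ⟨s w, fun X hX hc => hc _ (hw X hX hc), rfl⟩
  have hall : ∀ y, y ∈ LOOP s z :=
    ind (fun y => y ∈ LOOP s z) (fun X hX _ => hX)
      (fun x hx X hX hc => hc _ (hx X hX hc))
  have hnk : n ∈ LOOP s k := by
    refine hk {x | n ∈ LOOP s x} (hall n) ?_
    intro u hu hinj
    rcases split u n hu with rfl | h
    · exact absurd (hinj k hkn) hne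
    · exact h
  have hcyc : n ∈ LOOP s (s n) := by
    rcases split k n hnk with rfl | h
    · exact absurd rfl hne
    · rwa [hkn] at h
  intro y hy
  rcases split n y hy with h | h
  · rw [h]; exact pre n n hcyc
  · exact pre n y h
end

section
/- If M is a finite type, then there exist k and n in M with s k = s n, k ≠ n, and k ∈ STEM; moreover the double successor is unique: for any j, ℓ in M with j ≠ ℓ and s j = s ℓ, the pair {j, ℓ} equals {k, n}. -/
theorem stmt19 (M : Type) (z : M) (s : M → M)
    (ind : ∀ P : M → Prop, P z → (∀ x, P x → P (s x)) → ∀ x, P x)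
    (hz : ∀ x : M, s x ≠ z)
    (hfin : Finite M) :
    ∃ k n : M, s k = s n ∧ k ≠ n ∧ k ∈ STEM z s ∧
      ∀ j ℓ : M, j ≠ ℓ → s j = s ℓ → ({j, ℓ} : Set M) = {k, n} := by
  classical
  have : Fintype M := Fintype.ofFinite M
  -- every element is z or a successor
  have surj : ∀ x : M, x = z ∨ ∃ y, s y = x :=
    ind (fun x => x = z ∨ ∃ y, s y = x) (Or.inl rfl) (fun x _ => Or.inr ⟨x, rfl⟩)
  -- s is not injective
  have hnotinj : ¬ Function.Injective s := by
    intro h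
    obtain ⟨y, hy⟩ := (Finite.injective_iff_surjective.mp h) z
    exact hz y hy
  obtain ⟨a, b, hsab, hab⟩ := Function.not_injective_iff.mp hnotinj
  -- the image of s is everything except z
  have himage : Finset.univ.image s = Finset.univ.erase z := by
    ext x
    simp only [Finset.mem_image, Finset.mem_erase, Finset.mem_univ, true_and, and_true]
    constructor
    · rintro ⟨y, rfl⟩; exact hz y
    · intro hx
      rcases surj x with h | ⟨y, hy⟩
      · exact absurd h hx
      · exact ⟨y, hy⟩
  have hcard_im : (Finset.univ.image s).card = Fintype.card M - 1 := by
    rw [himage, Finset.card_erase_of_mem (Finset.mem_univ z), Finset.card_univ]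
  have hnt : Nontrivial M := ⟨a, b, hab⟩
  have hcard2 : 2 ≤ Fintype.card M := Fintype.one_lt_card
  -- key counting lemma: two "essentially different" collisions are impossible
  have key : ∀ c d e f : M, c ≠ d → e ≠ f → s c = s d → s e = s f →
      f ∉ ({c, d} : Set M) → False := by
    intro c d e f hcd hef h1 h2 hf
    simp only [Set.mem_insert_iff, Set.mem_singleton_iff, not_or] at hf
    obtain ⟨hfc, hfd⟩ := hf
    have hsub : Finset.univ.image s ⊆ (Finset.univ \ ({d, f} : Finset M)).image s := by
      intro x hx
      simp only [Finset.mem_image, Finset.mem_sdiff, Finset.mem_univ, true_and,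
        Finset.mem_insert, Finset.mem_singleton, not_or] at hx ⊢
      obtain ⟨y, hy⟩ := hx
      by_cases hyd : y = d
      · exact ⟨c, ⟨hcd, fun h => hfc h.symm⟩, by rw [← hy, hyd]; exact h1⟩
      · by_cases hyf : y = f
        · by_cases hed : e = d
          · refine ⟨c, ⟨hcd, fun h => hfc h.symm⟩, ?_⟩
            rw [← hy, hyf, ← h2, hed]; exact h1
          · exact ⟨e, ⟨hed, hef⟩, by rw [← hy, hyf]; exact h2⟩
        · exact ⟨y, ⟨hyd, hyf⟩, hy⟩
    have hdf : d ≠ f := fun h => hfd h.symm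
    have hcard2' : (Finset.univ \ ({d, f} : Finset M)).card = Fintype.card M - 2 := by
      rw [Finset.card_sdiff_of_subset (Finset.subset_univ _), Finset.card_univ]
      congr 1
      rw [Finset.card_insert_of_notMem (by simp [hdf]), Finset.card_singleton]
    have hle : Fintype.card M - 1 ≤ Fintype.card M - 2 := by
      calc Fintype.card M - 1 = (Finset.univ.image s).card := hcard_im.symm
        _ ≤ ((Finset.univ \ ({d, f} : Finset M)).image s).card := Finset.card_le_card hsub
        _ ≤ (Finset.univ \ ({d, f} : Finset M)).card := Finset.card_image_le
        _ = Fintype.card M - 2 := hcard2'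
    omega
  -- uniqueness of the collision pair
  have uniq : ∀ c d e f : M, c ≠ d → e ≠ f → s c = s d → s e = s f →
      ({e, f} : Set M) = {c, d} := by
    intro c d e f hcd hef h1 h2
    by_cases hfm : f ∈ ({c, d} : Set M)
    · by_cases hem : e ∈ ({c, d} : Set M)
      · rcases hem with he | he <;> rcases hfm with hf | hf <;>
          simp -failIfUnchanged only [Set.mem_singleton_iff] at *
        · exact absurd (he.trans hf.symm) hef
        · rw [he, hf]
        · rw [he, hf, Set.pair_comm]
        · exact absurd (he.trans hf.symm) hef
      · exact absurd (key c d f e hcd hef.symm h1 h2.symm hem) id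
    · exact absurd (key c d e f hcd hef h1 h2 hfm) id
  -- one of a, b lies in STEM
  have hstem : a ∈ STEM z s ∨ b ∈ STEM z s := by
    by_contra h
    push_neg at h
    have hall : ∀ x, x ∈ STEM z s := by
      refine ind (· ∈ STEM z s) (fun X hzX _ => hzX) ?_
      intro x hx X hzX hcl
      refine hcl x (hx X hzX hcl) ?_
      intro v hv
      by_contra hvx
      have hpair := uniq a b v x hab hvx (hsab) hv
      have hxab : x ∈ ({a, b} : Set M) := by
        rw [← hpair]; exact Or.inr rfl
      rcases hxab with hxa | hxb
      · exact h.1 (hxa ▸ hx)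
      · exact h.2 (hxb ▸ hx)
    exact h.1 (hall a)
  rcases hstem with ha | hb
  · exact ⟨a, b, hsab, hab, ha, fun j ℓ hjl hsjl => uniq a b j ℓ hab hjl hsab hsjl⟩
  · refine ⟨b, a, hsab.symm, hab.symm, hb, fun j ℓ hjl hsjl => ?_⟩
    rw [uniq a b j ℓ hab hjl hsab hsjl, Set.pair_comm]
end
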